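/- arXiv:2409.06058 — 5 statements merged into one kernel-verified Lean document; each statement's English description precedes it below -/
import Mathlib

section
/- Let (a_n)_{n∈ℤ} be complex numbers with Σ_{n∈ℤ}|a_n| < ∞, and define f(x,t) = Σ_{n∈ℤ} a_n e(nx − n²t) and g(x) = f(x,0). Then for every irreducible fraction a/q (a an integer, q a positive integer, gcd(a,q)=1) and every real x, f(x, a/q) = (1/q)·Σ_{k=0}^{q−1} conj(G(a,k,q))·g(x + k/q). -/
noncomputable def e (x : ℝ) : ℂ := Complex.exp (2 * Real.pi * Complex.I * x)

noncomputable def G (a k : ℤ) (q : ℕ) : ℂ :=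
  ∑ ℓ ∈ Finset.range q, e (((a * ℓ ^ 2 + k * ℓ : ℤ) : ℝ) / q)

noncomputable def f (a : ℤ → ℂ) (x t : ℝ) : ℂ :=
  ∑' n : ℤ, a n * e (n * x - n ^ 2 * t)

lemma e_add (x y : ℝ) : e (x + y) = e x * e y := by
  simp [e, Complex.ofReal_add, mul_add, Complex.exp_add]
lemma e_int (m : ℤ) : e m = 1 := by
  have := Complex.exp_int_mul_two_pi_mul_I m
  rw [e, ← this]; push_cast; ring_nf
lemma e_pow (x : ℝ) (k : ℕ) : e x ^ k = e (k * x) := by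
  rw [e, e, ← Complex.exp_nat_mul]; push_cast; ring_nf
lemma e_div_dvd {q : ℕ} (hq : 0 < q) {m : ℤ} (h : (q:ℤ) ∣ m) : e ((m:ℝ)/q) = 1 := by
  obtain ⟨c, rfl⟩ := h
  have hq' : (q:ℝ) ≠ 0 := by positivity
  have : ((q * c : ℤ) : ℝ) / q = (c : ℝ) := by push_cast; field_simp
  rw [this]
  exact e_int c
lemma e_div_congr {q : ℕ} (hq : 0 < q) {m₁ m₂ : ℤ} (h : (q:ℤ) ∣ m₁ - m₂) :
    e ((m₁:ℝ)/q) = e ((m₂:ℝ)/q) := by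
  obtain ⟨c, hc⟩ := h
  have hq' : (q:ℝ) ≠ 0 := by positivity
  have h1 : (m₁:ℝ)/q = (m₂:ℝ)/q + (c:ℝ) := by
    have h2 : m₁ = m₂ + q * c := by linarith
    have : (m₁ : ℝ) = (m₂ : ℝ) + (q : ℝ) * (c : ℝ) := by exact_mod_cast congrArg (fun z : ℤ => (z : ℝ)) h2
    rw [this]; field_simp
  rw [h1, e_add, e_int, mul_one]
lemma e_ne_one {q : ℕ} (hq : 0 < q) {m : ℤ} (h : ¬ (q:ℤ) ∣ m) : e ((m:ℝ)/q) ≠ 1 := by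
  intro hone
  rw [e, Complex.exp_eq_one_iff] at hone
  obtain ⟨n, hn⟩ := hone
  have hq' : (q:ℂ) ≠ 0 := by exact_mod_cast (by positivity : (q:ℝ) ≠ 0)
  have h2 : (2 * (Real.pi:ℂ) * Complex.I : ℂ) ≠ 0 := by
    simp [Complex.I_ne_zero, Real.pi_ne_zero]
  push_cast at hn
  have h3 : ((m:ℂ)/q : ℂ) = (n : ℂ) := by
    apply mul_left_cancel₀ h2
    rw [hn]
    ring
  have h4 : (m : ℂ) = (n : ℂ) * (q : ℂ) := by
    rw [← h3]; field_simp
  have h5 : m = n * q := by exact_mod_cast h4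
  exact h ⟨n, by linarith⟩
lemma sum_e {q : ℕ} (hq : 0 < q) (m : ℤ) :
    ∑ k ∈ Finset.range q, e (((m * k : ℤ) : ℝ) / q) = if (q:ℤ) ∣ m then (q:ℂ) else 0 := by
  have hterm : ∀ k : ℕ, e (((m * k : ℤ) : ℝ) / q) = e ((m:ℝ)/q) ^ k := by
    intro k
    rw [e_pow]
    congr 1
    push_cast; ring
  simp only [hterm]
  by_cases h : (q:ℤ) ∣ m
  · rw [e_div_dvd hq h, if_pos h]
    simp
  · rw [if_neg h, geom_sum_eq (e_ne_one hq h)]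
    have : e ((m:ℝ)/q) ^ q = 1 := by
      rw [e_pow]
      have hq' : (q:ℝ) ≠ 0 := by positivity
      have : (q:ℝ) * ((m:ℝ)/q) = ((m:ℤ):ℝ) := by field_simp
      rw [this, e_int]
    rw [this]; simp
lemma e_conj (x : ℝ) : (starRingEnd ℂ) (e x) = e (-x) := by
  rw [e, e, ← Complex.exp_conj]
  congr 1
  rw [map_mul, map_mul, map_mul, Complex.conj_I, Complex.conj_ofReal, Complex.conj_ofReal]
  simp only [map_ofNat]
  push_cast
  ring
lemma e_div_add {q : ℕ} (m₁ m₂ : ℤ) :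
    e ((m₁:ℝ)/q) * e ((m₂:ℝ)/q) = e (((m₁ + m₂ : ℤ):ℝ)/q) := by
  rw [← e_add]; congr 1; push_cast; ring
lemma key (A : ℤ) (q : ℕ) (hq : 0 < q) (n : ℤ) :
    ∑ k ∈ Finset.range q, (starRingEnd ℂ) (G A k q) * e (((n * k : ℤ):ℝ)/q)
      = q * e (((-(A * n^2) : ℤ):ℝ)/q) := by
  have hconj : ∀ k : ℕ, (starRingEnd ℂ) (G A k q)
      = ∑ ℓ ∈ Finset.range q, e (((-(A * ℓ^2 + k * ℓ) : ℤ):ℝ)/q) := by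
    intro k
    rw [G, map_sum]
    refine Finset.sum_congr rfl fun ℓ _ => ?_
    rw [e_conj]
    congr 1
    push_cast; ring
  have hsplit : ∀ k ℓ : ℕ, e (((-(A * ℓ^2 + k * ℓ) : ℤ):ℝ)/q) * e (((n * k : ℤ):ℝ)/q)
      = e (((-(A * ℓ^2) : ℤ):ℝ)/q) * e ((((n - ℓ) * k : ℤ):ℝ)/q) := by
    intro k ℓ
    rw [e_div_add, e_div_add]
    congr 2
    push_cast; ring
  calc ∑ k ∈ Finset.range q, (starRingEnd ℂ) (G A k q) * e (((n * k : ℤ):ℝ)/q)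
      = ∑ k ∈ Finset.range q, ∑ ℓ ∈ Finset.range q,
          e (((-(A * ℓ^2) : ℤ):ℝ)/q) * e ((((n - ℓ) * k : ℤ):ℝ)/q) := by
        refine Finset.sum_congr rfl fun k _ => ?_
        rw [hconj, Finset.sum_mul]
        exact Finset.sum_congr rfl fun ℓ _ => hsplit k ℓ
    _ = ∑ ℓ ∈ Finset.range q, e (((-(A * ℓ^2) : ℤ):ℝ)/q) *
          ∑ k ∈ Finset.range q, e ((((n - ℓ) * k : ℤ):ℝ)/q) := by
        rw [Finset.sum_comm]
        exact Finset.sum_congr rfl fun ℓ _ => by rw [Finset.mul_sum]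
    _ = ∑ ℓ ∈ Finset.range q, e (((-(A * ℓ^2) : ℤ):ℝ)/q) *
          (if (q:ℤ) ∣ (n - ℓ) then (q:ℂ) else 0) := by
        exact Finset.sum_congr rfl fun ℓ _ => by rw [sum_e hq]
    _ = q * e (((-(A * n^2) : ℤ):ℝ)/q) := by
        have hqz : ((q:ℤ)) ≠ 0 := by exact_mod_cast hq.ne'
        set ℓ0 : ℕ := (n % q).toNat with hℓ0def
        have h0 : (ℓ0 : ℤ) = n % q := Int.toNat_of_nonneg (Int.emod_nonneg n hqz)
        have hmem : ℓ0 ∈ Finset.range q := by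
          refine Finset.mem_range.mpr ?_
          have h1 := Int.emod_lt_of_pos n (by exact_mod_cast hq : (0:ℤ) < q)
          have h2 := Int.emod_nonneg n hqz
          omega
        have hdvd : (q:ℤ) ∣ n - ℓ0 := by
          rw [h0]
          exact ⟨n / q, by linarith [Int.mul_ediv_add_emod n q]⟩
        rw [Finset.sum_eq_single ℓ0]
        · rw [if_pos hdvd]
          have hd2 : (q:ℤ) ∣ (-(A * ℓ0^2)) - (-(A * n^2)) := by
            have hr : (-(A * (ℓ0:ℤ)^2)) - (-(A * n^2)) = (A * (n + ℓ0)) * (n - ℓ0) := by ring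
            rw [hr]
            exact Dvd.dvd.mul_left hdvd _
          rw [e_div_congr hq hd2]
          ring
        · intro ℓ hmemℓ hne
          rw [if_neg, mul_zero]
          intro hd
          have h1 : (ℓ:ℤ) % q = n % q := Int.modEq_iff_dvd.mpr hd
          have h2 : (ℓ:ℤ) % q = ℓ :=
            Int.emod_eq_of_lt (by positivity)
              (by exact_mod_cast Finset.mem_range.mp hmemℓ)
          exact hne (by omega)
        · intro h; exact absurd hmem h
lemma e_norm (x : ℝ) : ‖e x‖ = 1 := by
  rw [e, Complex.norm_exp]
  have : (2 * ↑Real.pi * Complex.I * ↑x).re = 0 := by simp [Complex.mul_re, Complex.mul_im]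
  simp [this]

theorem stmt0 (a : ℤ → ℂ) (ha : Summable fun n : ℤ => ‖a n‖)
    (A : ℤ) (q : ℕ) (hq : 0 < q) (hcop : Int.gcd A q = 1) (x : ℝ) :
    f a x ((A : ℝ) / q) =
      (1 / q) * ∑ k ∈ Finset.range q,
        (starRingEnd ℂ) (G A k q) * f a (x + (k : ℝ) / q) 0 := by
  have hqr : (q:ℝ) ≠ 0 := by positivity
  have hqc : (q:ℂ) ≠ 0 := by exact_mod_cast hqr
  have hsum : ∀ y t : ℝ, Summable (fun n : ℤ => a n * e (n * y - n^2 * t)) := by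
    intro y t
    apply Summable.of_norm
    simpa only [norm_mul, e_norm, mul_one] using ha
  have step : ∀ k ∈ Finset.range q, (starRingEnd ℂ) (G A k q) * f a (x + (k:ℝ)/q) 0
      = ∑' n : ℤ, (starRingEnd ℂ) (G A (k:ℤ) q) * (a n * e (n * (x + (k:ℝ)/q) - n^2*0)) := by
    intro k _
    rw [f, ← tsum_mul_left]
  have hswap : ∑ k ∈ Finset.range q, ∑' n : ℤ,
        (starRingEnd ℂ) (G A (k:ℤ) q) * (a n * e (n * (x + (k:ℝ)/q) - n^2*0))
      = ∑' n : ℤ, ∑ k ∈ Finset.range q,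
        (starRingEnd ℂ) (G A (k:ℤ) q) * (a n * e (n * (x + (k:ℝ)/q) - n^2*0)) :=
    (Summable.tsum_finsetSum (f := fun (k:ℕ) (n:ℤ) =>
        (starRingEnd ℂ) (G A (k:ℤ) q) * (a n * e (n * (x + (k:ℝ)/q) - n^2*0)))
      (fun k _ => ((hsum (x + (k:ℝ)/q) 0).mul_left _))).symm
  rw [Finset.sum_congr rfl step, hswap, ← tsum_mul_left, f]
  refine tsum_congr fun n => ?_
  have hL : (n:ℝ) * x - (n:ℝ)^2 * ((A:ℝ)/q) = (n:ℝ)*x + ((-(A * n^2) : ℤ):ℝ)/q := by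
    push_cast; ring
  have hR : ∀ k : ℕ, (n:ℝ) * (x + (k:ℝ)/q) - (n:ℝ)^2 * 0 = (n:ℝ)*x + ((n * k : ℤ):ℝ)/q := by
    intro k; push_cast; ring
  rw [hL, e_add]
  have : ∑ k ∈ Finset.range q, (starRingEnd ℂ) (G A (k:ℤ) q) *
      (a n * e ((n:ℝ) * (x + (k:ℝ)/q) - (n:ℝ)^2*0))
      = (a n * e ((n:ℝ)*x)) * ∑ k ∈ Finset.range q,
          (starRingEnd ℂ) (G A (k:ℤ) q) * e (((n * k : ℤ):ℝ)/q) := by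
    rw [Finset.mul_sum]
    refine Finset.sum_congr rfl fun k _ => ?_
    rw [hR k, e_add]
    ring
  rw [this, key A q hq n]
  field_simp
end

section
/- Let P(x,y) be a polynomial in two variables with rational coefficients, let n₁, n₂ be positive integers, and set ζ₁ = e(1/n₁), ζ₂ = e(1/n₂). If P(ζ₁, ζ₂) = 0, then P(ζ₁^{m₁}, ζ₂^{m₂}) = 0 for all integers m₁, m₂ with 0 < m₁ ≤ n₁, 0 < m₂ ≤ n₂, gcd(m₁, n₁) = gcd(m₂, n₂) = 1, and gcd(n₁, n₂) dividing m₁ − m₂. -/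
open IntermediateField in
theorem stmt10 (P : MvPolynomial (Fin 2) ℚ) (n₁ n₂ : ℕ) (h₁ : 0 < n₁) (h₂ : 0 < n₂)
    (hP : MvPolynomial.aeval ![e (1 / (n₁ : ℝ)), e (1 / (n₂ : ℝ))] P = 0)
    (m₁ m₂ : ℕ) (hm₁ : 0 < m₁) (hm₁' : m₁ ≤ n₁) (hm₂ : 0 < m₂) (hm₂' : m₂ ≤ n₂)
    (hc₁ : Nat.gcd m₁ n₁ = 1) (hc₂ : Nat.gcd m₂ n₂ = 1)
    (hd : (Nat.gcd n₁ n₂ : ℤ) ∣ (m₁ : ℤ) - (m₂ : ℤ)) :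
    MvPolynomial.aeval ![(e (1 / (n₁ : ℝ))) ^ m₁, (e (1 / (n₂ : ℝ))) ^ m₂] P = 0 := by
  classical
  set N := Nat.lcm n₁ n₂ with hNdef
  have hN0 : N ≠ 0 := Nat.lcm_ne_zero h₁.ne' h₂.ne'
  -- CRT
  have hmod : m₂ ≡ m₁ [MOD Nat.gcd n₂ n₁] := by
    rw [Nat.modEq_iff_dvd, Nat.gcd_comm]
    exact_mod_cast hd
  obtain ⟨k, hk₂, hk₁⟩ := Nat.chineseRemainder' hmod
  -- k is coprime to N
  have hkc₁ : Nat.gcd k n₁ = 1 := by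
    rw [Nat.gcd_comm, Nat.gcd_rec, (hk₁ : k % n₁ = m₁ % n₁), ← Nat.gcd_rec, Nat.gcd_comm]
    exact hc₁
  have hkc₂ : Nat.gcd k n₂ = 1 := by
    rw [Nat.gcd_comm, Nat.gcd_rec, (hk₂ : k % n₂ = m₂ % n₂), ← Nat.gcd_rec, Nat.gcd_comm]
    exact hc₂
  have hkN : Nat.Coprime k N := (Nat.Coprime.mul_right hkc₁ hkc₂).coprime_dvd_right (Nat.lcm_dvd_mul _ _)
  have hNpos : 0 < N := Nat.pos_of_ne_zero hN0
  set ζ : ℂ := e (1 / (N : ℝ)) with hζdef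
  have hζ : IsPrimitiveRoot ζ N := by
    have h := Complex.isPrimitiveRoot_exp N hN0
    have harg : ζ = Complex.exp (2 * Real.pi * Complex.I / N) := by
      rw [hζdef]; unfold e; congr 1; push_cast; ring
    rw [harg]; exact h
  have hζ₁ : IsPrimitiveRoot (e (1 / (n₁ : ℝ))) n₁ := by
    have h := Complex.isPrimitiveRoot_exp n₁ h₁.ne'
    have harg : e (1 / (n₁ : ℝ)) = Complex.exp (2 * Real.pi * Complex.I / n₁) := by
      unfold e; congr 1; push_cast; ring
    rw [harg]; exact h
  have hζ₂ : IsPrimitiveRoot (e (1 / (n₂ : ℝ))) n₂ := by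
    have h := Complex.isPrimitiveRoot_exp n₂ h₂.ne'
    have harg : e (1 / (n₂ : ℝ)) = Complex.exp (2 * Real.pi * Complex.I / n₂) := by
      unfold e; congr 1; push_cast; ring
    rw [harg]; exact h
  set d₁ := N / n₁ with hd₁def
  set d₂ := N / n₂ with hd₂def
  have hd₁ : d₁ * n₁ = N := Nat.div_mul_cancel (Nat.dvd_lcm_left _ _)
  have hd₂ : d₂ * n₂ = N := Nat.div_mul_cancel (Nat.dvd_lcm_right _ _)
  have hz1 : e (1 / (n₁ : ℝ)) = ζ ^ d₁ := by
    have hc : (d₁ : ℂ) * (n₁ : ℂ) = (N : ℂ) := by exact_mod_cast hd₁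
    rw [hζdef]
    unfold e
    rw [← Complex.exp_nat_mul]
    congr 1
    have h1 : (n₁ : ℂ) ≠ 0 := Nat.cast_ne_zero.2 h₁.ne'
    have h2 : (N : ℂ) ≠ 0 := Nat.cast_ne_zero.2 hN0
    push_cast
    field_simp
    linear_combination (-1:ℂ) * hc
  have hz2 : e (1 / (n₂ : ℝ)) = ζ ^ d₂ := by
    have hc : (d₂ : ℂ) * (n₂ : ℂ) = (N : ℂ) := by exact_mod_cast hd₂
    rw [hζdef]
    unfold e
    rw [← Complex.exp_nat_mul]
    congr 1
    have h1 : (n₂ : ℂ) ≠ 0 := Nat.cast_ne_zero.2 h₂.ne'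
    have h2 : (N : ℂ) ≠ 0 := Nat.cast_ne_zero.2 hN0
    push_cast
    field_simp
    linear_combination (-1:ℂ) * hc
  have hint : IsIntegral ℚ ζ := (hζ.isIntegral hNpos).tower_top
  set pb := IntermediateField.adjoin.powerBasis hint with hpbdef
  have hroot : Polynomial.aeval (ζ ^ k) (minpoly ℚ pb.gen) = 0 := by
    rw [IntermediateField.adjoin.powerBasis_gen]
    erw [IntermediateField.minpoly_gen]
    rw [← Polynomial.cyclotomic_eq_minpoly_rat hζ hNpos,
      Polynomial.cyclotomic_eq_minpoly_rat (hζ.pow_of_coprime k hkN) hNpos]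
    exact minpoly.aeval _ _
  set σ := pb.lift (ζ ^ k) hroot with hσdef
  have hσgen : σ pb.gen = ζ ^ k := pb.lift_gen _ _
  have hgenval : (algebraMap _ ℂ) pb.gen = ζ := by
    rw [IntermediateField.adjoin.powerBasis_gen]
    exact IntermediateField.AdjoinSimple.algebraMap_gen ℚ ζ
  set Q := MvPolynomial.aeval ![pb.gen ^ d₁, pb.gen ^ d₂] P with hQdef
  have hcoe : (algebraMap (↥ℚ⟮ζ⟯) ℂ : ↥ℚ⟮ζ⟯ → ℂ) = ⇑(IsScalarTower.toAlgHom ℚ (↥ℚ⟮ζ⟯) ℂ) := rfl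
  have h1 : algebraMap _ ℂ Q = MvPolynomial.aeval ![e (1 / (n₁ : ℝ)), e (1 / (n₂ : ℝ))] P := by
    have hfun0 : (fun i => (IsScalarTower.toAlgHom ℚ _ ℂ) (![pb.gen ^ d₁, pb.gen ^ d₂] i))
        = ![e (1 / (n₁ : ℝ)), e (1 / (n₂ : ℝ))] := by
      funext i
      have hz1' : e ((n₁ : ℝ))⁻¹ = ζ ^ d₁ := by rw [← one_div]; exact hz1
      have hz2' : e ((n₂ : ℝ))⁻¹ = ζ ^ d₂ := by rw [← one_div]; exact hz2
      fin_cases i <;> simp [map_pow, hgenval, hz1, hz2, hz1', hz2']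
    rw [hQdef, hcoe, MvPolynomial.comp_aeval_apply, hfun0]
  have hQ0 : Q = 0 := (algebraMap _ ℂ).injective (by rw [h1, hP, map_zero])
  have key : MvPolynomial.aeval (fun i => σ (![pb.gen ^ d₁, pb.gen ^ d₂] i)) P = 0 := by
    rw [← MvPolynomial.comp_aeval_apply]
    exact (show σ Q = 0 by rw [hQ0, map_zero])
  have e1 : e (1 / (n₁ : ℝ)) ^ m₁ = e (1 / (n₁ : ℝ)) ^ k := by
    have ho : orderOf (e (1 / (n₁ : ℝ))) = n₁ := hζ₁.eq_orderOf.symm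
    rw [← pow_mod_orderOf (e (1 / (n₁ : ℝ))) m₁, ← pow_mod_orderOf (e (1 / (n₁ : ℝ))) k, ho,
      (hk₁ : k % n₁ = m₁ % n₁)]
  have e2 : e (1 / (n₂ : ℝ)) ^ m₂ = e (1 / (n₂ : ℝ)) ^ k := by
    have ho : orderOf (e (1 / (n₂ : ℝ))) = n₂ := hζ₂.eq_orderOf.symm
    rw [← pow_mod_orderOf (e (1 / (n₂ : ℝ))) m₂, ← pow_mod_orderOf (e (1 / (n₂ : ℝ))) k, ho,
      (hk₂ : k % n₂ = m₂ % n₂)]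
  have hfun : ![e (1 / (n₁ : ℝ)) ^ m₁, e (1 / (n₂ : ℝ)) ^ m₂]
      = fun i => σ (![pb.gen ^ d₁, pb.gen ^ d₂] i) := by
    funext i
    fin_cases i
    · show e (1 / (n₁ : ℝ)) ^ m₁ = σ (pb.gen ^ d₁)
      rw [e1, map_pow, hσgen, ← pow_mul, mul_comm k d₁, pow_mul, ← hz1]
    · show e (1 / (n₂ : ℝ)) ^ m₂ = σ (pb.gen ^ d₂)
      rw [e2, map_pow, hσgen, ← pow_mul, mul_comm k d₂, pow_mul, ← hz2]
  rw [hfun]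
  exact key
end

section
/- Let P(x,y) be a polynomial in two variables with rational coefficients, let n₁, n₂ be positive integers with gcd(n₁, n₂) = 1, and set ζ₁ = e(1/n₁), ζ₂ = e(1/n₂). Assume P(ζ₁, ζ₂) = 0 and that the degree of P in the first variable is strictly less than φ(n₁) (Euler's totient, which is the degree of the n₁-th cyclotomic polynomial). Then for every integer e₂ with gcd(e₂, n₂) = 1, the one-variable polynomial P(x, ζ₂^{e₂}) is identically zero, i.e. P(z, ζ₂^{e₂}) = 0 for every complex number z. -/
private lemma pow_modEq {M : Type*} [Monoid M] {u : M} {n : ℕ} (hu : u ^ n = 1)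
    {a b : ℕ} (h : a ≡ b [MOD n]) : u ^ a = u ^ b := by
  have h' : a % n = b % n := h
  conv_lhs => rw [← Nat.div_add_mod a n]
  conv_rhs => rw [← Nat.div_add_mod b n]
  rw [pow_add, pow_add, pow_mul, pow_mul, hu, one_pow, one_pow, h']

private lemma e_pow_helper {a b : ℕ} (ha : a ≠ 0) (hb : b ≠ 0) :
    (e (1 / ((a * b : ℕ) : ℝ))) ^ b = e (1 / (a : ℝ)) := by
  have ha' : (a : ℂ) ≠ 0 := Nat.cast_ne_zero.mpr ha
  have hb' : (b : ℂ) ≠ 0 := Nat.cast_ne_zero.mpr hb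
  unfold e
  rw [← Complex.exp_nat_mul]
  congr 1
  push_cast
  field_simp

private lemma e_primitive {n : ℕ} (hn : n ≠ 0) : IsPrimitiveRoot (e (1 / (n : ℝ))) n := by
  have : e (1 / (n : ℝ)) = Complex.exp (2 * Real.pi * Complex.I / n) := by
    unfold e; congr 1; push_cast; ring
  rw [this]
  exact Complex.isPrimitiveRoot_exp n hn

theorem stmt11 (P : MvPolynomial (Fin 2) ℚ) (n₁ n₂ : ℕ) (h₁ : 0 < n₁) (h₂ : 0 < n₂)
    (hcop : Nat.gcd n₁ n₂ = 1)
    (hP : MvPolynomial.aeval ![e (1 / (n₁ : ℝ)), e (1 / (n₂ : ℝ))] P = 0)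
    (hdeg : MvPolynomial.degreeOf 0 P < Nat.totient n₁)
    (e₂ : ℤ) (he₂ : Int.gcd e₂ n₂ = 1) (z : ℂ) :
    MvPolynomial.aeval ![z, (e (1 / (n₂ : ℝ))) ^ e₂] P = 0 := by
  set N := n₁ * n₂ with hNdef
  have hNpos : 0 < N := Nat.mul_pos h₁ h₂
  set ζ := e (1 / (N : ℝ)) with hζdef
  set ζ₁ := e (1 / (n₁ : ℝ)) with hζ₁def
  set ζ₂ := e (1 / (n₂ : ℝ)) with hζ₂def
  have hζ : IsPrimitiveRoot ζ N := e_primitive hNpos.ne'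
  have hζ₁ : IsPrimitiveRoot ζ₁ n₁ := e_primitive h₁.ne'
  have hζ₂ : IsPrimitiveRoot ζ₂ n₂ := e_primitive h₂.ne'
  have hζ₁N : ζ ^ n₂ = ζ₁ := e_pow_helper h₁.ne' h₂.ne'
  have hζ₂N : ζ ^ n₁ = ζ₂ := by
    have : ζ = e (1 / ((n₂ * n₁ : ℕ) : ℝ)) := by rw [hζdef, hNdef, mul_comm]
    rw [this]; exact e_pow_helper h₂.ne' h₁.ne'
  -- reduce the integer exponent to a natural number k coprime to n₂
  have hn₂Z : ((n₂ : ℤ)) ≠ 0 := Int.natCast_ne_zero.mpr h₂.ne'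
  set k : ℕ := (e₂ % (n₂ : ℤ)).toNat with hkdef
  have hkZ : ((k : ℤ)) = e₂ % (n₂ : ℤ) := Int.toNat_of_nonneg (Int.emod_nonneg e₂ hn₂Z)
  have hζ₂ne : ζ₂ ≠ 0 := hζ₂.ne_zero h₂.ne'
  have hk2 : ζ₂ ^ e₂ = ζ₂ ^ k := by
    have h1 : (n₂ : ℤ) * (e₂ / (n₂ : ℤ)) + e₂ % (n₂ : ℤ) = e₂ := Int.mul_ediv_add_emod e₂ (n₂ : ℤ)
    calc ζ₂ ^ e₂ = ζ₂ ^ ((n₂ : ℤ) * (e₂ / (n₂ : ℤ)) + e₂ % (n₂ : ℤ)) := by rw [h1]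
      _ = (ζ₂ ^ ((n₂ : ℤ) * (e₂ / (n₂ : ℤ)))) * ζ₂ ^ (e₂ % (n₂ : ℤ)) := zpow_add₀ hζ₂ne _ _
      _ = ((ζ₂ ^ (n₂ : ℤ)) ^ (e₂ / (n₂ : ℤ))) * ζ₂ ^ ((k : ℤ)) := by rw [zpow_mul, hkZ]
      _ = ζ₂ ^ k := by
          rw [show ζ₂ ^ ((n₂ : ℤ)) = 1 by rw [zpow_natCast, hζ₂.pow_eq_one],
            one_zpow, one_mul, zpow_natCast]
  have hkcop : Nat.Coprime k n₂ := by
    have hc : IsCoprime e₂ (n₂ : ℤ) := Int.isCoprime_iff_gcd_eq_one.mpr he₂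
    have hc2 : IsCoprime ((k : ℤ)) ((n₂ : ℤ)) := by
      rw [hkZ, Int.emod_def, sub_eq_add_neg, ← mul_neg]
      exact hc.add_mul_left_left _
    have := Int.isCoprime_iff_gcd_eq_one.mp hc2
    simpa [Int.gcd_natCast_natCast] using this
  -- the univariate polynomial f(x) = P(x, ζ₂^k)
  set c : ℂ := ζ₂ ^ k with hcdef
  set f : Polynomial ℂ := ∑ m ∈ P.support,
      Polynomial.C ((algebraMap ℚ ℂ) (MvPolynomial.coeff m P) * c ^ (m 1)) *
        Polynomial.X ^ (m 0) with hfdef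
  have heval : ∀ w : ℂ, Polynomial.eval w f = MvPolynomial.aeval ![w, c] P := by
    intro w
    rw [MvPolynomial.aeval_def, MvPolynomial.eval₂_eq', hfdef, Polynomial.eval_finset_sum]
    refine Finset.sum_congr rfl fun m _ => ?_
    simp [Fin.prod_univ_two]
    ring
  have totpos : 0 < Nat.totient n₁ := lt_of_le_of_lt (Nat.zero_le _) hdeg
  have hsupp : ∀ m ∈ P.support, m 0 < Nat.totient n₁ :=
    (MvPolynomial.degreeOf_lt_iff totpos).mp hdeg
  have hfdeg : f.natDegree < Nat.totient n₁ := by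
    have hle : f.natDegree ≤ Nat.totient n₁ - 1 := by
      rw [hfdef]
      refine Polynomial.natDegree_sum_le_of_forall_le _ _ fun m hm => ?_
      calc (Polynomial.C ((algebraMap ℚ ℂ) (MvPolynomial.coeff m P) * c ^ (m 1)) *
            Polynomial.X ^ (m 0)).natDegree
          ≤ (Polynomial.X ^ (m 0) : Polynomial ℂ).natDegree := Polynomial.natDegree_C_mul_le _ _
        _ = m 0 := Polynomial.natDegree_X_pow _
        _ ≤ Nat.totient n₁ - 1 := Nat.le_sub_one_of_lt (hsupp m hm)
    omega
  -- f vanishes at every primitive n₁-th root of unity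
  haveI : NeZero n₁ := ⟨h₁.ne'⟩
  -- the auxiliary univariate polynomial over ℚ
  set S : Polynomial ℚ :=
    MvPolynomial.aeval ![(Polynomial.X : Polynomial ℚ) ^ n₂, (Polynomial.X : Polynomial ℚ) ^ n₁] P
    with hSdef
  have hcompS : ∀ u : ℂ, Polynomial.aeval u S = MvPolynomial.aeval ![u ^ n₂, u ^ n₁] P := by
    intro u
    have hv : (fun i => Polynomial.aeval u
        (![(Polynomial.X : Polynomial ℚ) ^ n₂, (Polynomial.X : Polynomial ℚ) ^ n₁] i))
        = ![u ^ n₂, u ^ n₁] := by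
      funext j
      fin_cases j <;> simp
    rw [hSdef, MvPolynomial.comp_aeval_apply, hv]
  have hSζ : Polynomial.aeval ζ S = 0 := by
    rw [hcompS, hζ₁N, hζ₂N]; exact hP
  have hmin : minpoly ℚ ζ ∣ S := minpoly.dvd ℚ ζ hSζ
  have hroots : ∀ w ∈ primitiveRoots n₁ ℂ, Polynomial.eval w f = 0 := by
    intro w hw
    have hw' : IsPrimitiveRoot w n₁ := (mem_primitiveRoots h₁).mp hw
    obtain ⟨i, hilt, hicop, hiw⟩ := (hζ₁.isPrimitiveRoot_iff).mp hw'
    obtain ⟨x, hx1, hx2⟩ := Nat.chineseRemainder hcop i k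
    have hxn₁ : Nat.Coprime x n₁ := by
      have hgcd : Nat.gcd x n₁ = Nat.gcd i n₁ := by
        have h' : x % n₁ = i % n₁ := hx1
        rw [Nat.gcd_comm, Nat.gcd_rec, h', ← Nat.gcd_rec, Nat.gcd_comm]
      rw [Nat.Coprime, hgcd]; exact hicop
    have hxn₂ : Nat.Coprime x n₂ := by
      have hgcd : Nat.gcd x n₂ = Nat.gcd k n₂ := by
        have h' : x % n₂ = k % n₂ := hx2
        rw [Nat.gcd_comm, Nat.gcd_rec, h', ← Nat.gcd_rec, Nat.gcd_comm]
      rw [Nat.Coprime, hgcd]; exact hkcop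
    have hxcop : Nat.Coprime x N := Nat.Coprime.mul_right hxn₁ hxn₂
    have hζx : IsPrimitiveRoot (ζ ^ x) N := hζ.pow_of_coprime x hxcop
    have hSx : Polynomial.aeval (ζ ^ x) S = 0 := by
      obtain ⟨q, hq⟩ := hmin
      rw [hq, map_mul, ← Polynomial.cyclotomic_eq_minpoly_rat hζ hNpos,
        Polynomial.cyclotomic_eq_minpoly_rat hζx hNpos, minpoly.aeval, zero_mul]
    rw [hcompS] at hSx
    have e1 : (ζ ^ x) ^ n₂ = w := by
      rw [← pow_mul, mul_comm, pow_mul, hζ₁N, ← hiw]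
      exact pow_modEq hζ₁.pow_eq_one hx1
    have e2 : (ζ ^ x) ^ n₁ = c := by
      rw [← pow_mul, mul_comm, pow_mul, hζ₂N, hcdef]
      exact pow_modEq hζ₂.pow_eq_one hx2
    rw [e1, e2] at hSx
    rw [heval w]
    exact hSx
  -- conclude f = 0
  have hf0 : f = 0 := by
    by_contra hf
    have hsub : primitiveRoots n₁ ℂ ⊆ f.roots.toFinset := by
      intro w hw
      exact Multiset.mem_toFinset.mpr
        ((Polynomial.mem_roots'.mpr ⟨hf, hroots w hw⟩))
    have hcard := Finset.card_le_card hsub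
    rw [Complex.card_primitiveRoots] at hcard
    have h2 : f.roots.toFinset.card ≤ Multiset.card f.roots := Multiset.toFinset_card_le _
    have h3 : Multiset.card f.roots ≤ f.natDegree := Polynomial.card_roots' f
    omega
  rw [hk2, ← heval z, hf0, Polynomial.eval_zero]
end

section
/- Let p be an odd prime, let u and t be positive integers with p not dividing t, let b, α, r be integers with gcd(b, p) = 1 and gcd(r, pt) = 1, and let K be an integer with 0 ≤ K < p. Then Σ_{k=0}^{K} e((bk² + αk)/p + rk/(p^{u+1}t)) ≠ 0. -/
open Complex Polynomial Finset

private lemma zpow_emod_eq {η : ℂ} {N : ℕ} (hη : η ≠ 0) (hN : 0 < N) (h1 : η ^ N = 1) (a : ℤ) :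
    η ^ a = η ^ (a % (N : ℤ)).toNat := by
  have hNz : η ^ (N : ℤ) = 1 := by rw [zpow_natCast]; exact h1
  have hnn : 0 ≤ a % (N : ℤ) := Int.emod_nonneg a (by exact_mod_cast hN.ne')
  conv_lhs => rw [show a = (N : ℤ) * (a / N) + a % N from (Int.mul_ediv_add_emod a N).symm]
  rw [zpow_add₀ hη, zpow_mul, hNz, one_zpow, one_mul, ← zpow_natCast,
    Int.toNat_of_nonneg hnn]

theorem stmt17 (p : ℕ) (hp : Nat.Prime p) (hodd : Odd p) (u t : ℕ) (hu : 0 < u)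
    (ht : 0 < t) (hpt : ¬ p ∣ t) (b α r : ℤ) (hb : Int.gcd b p = 1)
    (hr : Int.gcd r ((p : ℤ) * t) = 1) (K : ℕ) (hK : K < p) :
    ∑ k ∈ Finset.range (K + 1),
      e (((b * k ^ 2 + α * k : ℤ) : ℝ) / p + ((r * k : ℤ) : ℝ) / ((p : ℝ) ^ (u + 1) * t)) ≠ 0 := by
  intro hcontra
  have hppos : 0 < p := hp.pos
  have hp0R : (p : ℝ) ≠ 0 := Nat.cast_ne_zero.mpr hppos.ne'
  have ht0R : (t : ℝ) ≠ 0 := Nat.cast_ne_zero.mpr ht.ne'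
  set N : ℕ := p ^ (u + 1) * t with hNdef
  have hNpos : 0 < N := Nat.mul_pos (Nat.pow_pos hppos) ht
  set ζ : ℂ := Complex.exp (2 * Real.pi * Complex.I / N) with hζdef
  have hζ : IsPrimitiveRoot ζ N := Complex.isPrimitiveRoot_exp N hNpos.ne'
  have hζ0 : ζ ≠ 0 := Complex.exp_ne_zero _
  set a : ℕ → ℤ := fun k => (p : ℤ) ^ u * t * (b * k ^ 2 + α * k) + r * k with hadef
  -- rewrite terms as powers of ζ
  have hterm : ∀ k : ℕ,
      e (((b * k ^ 2 + α * k : ℤ) : ℝ) / p + ((r * k : ℤ) : ℝ) / ((p : ℝ) ^ (u + 1) * t))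
        = ζ ^ a k := by
    intro k
    have hreal : (((b * k ^ 2 + α * k : ℤ) : ℝ) / p + ((r * k : ℤ) : ℝ) / ((p : ℝ) ^ (u + 1) * t))
        = ((a k : ℝ)) / (N : ℝ) := by
      have hNR : (N : ℝ) = (p : ℝ) ^ (u + 1) * t := by rw [hNdef]; push_cast; ring
      rw [hNR, hadef]
      push_cast
      field_simp
      ring
    rw [e, hreal]
    rw [show ((2 : ℂ) * Real.pi * Complex.I * ((((a k : ℝ)) / (N : ℝ) : ℝ) : ℂ))
        = (a k : ℂ) * (2 * Real.pi * Complex.I / N) by push_cast; ring]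
    rw [Complex.exp_int_mul, hζdef]
  have hS : ∑ k ∈ Finset.range (K + 1), ζ ^ a k = 0 := by
    rw [← hcontra]
    exact (Finset.sum_congr rfl fun k _ => (hterm k)).symm
  -- polynomial argument
  set n : ℕ → ℕ := fun k => (a k % (N : ℤ)).toNat with hndef
  set P : Polynomial ℚ := ∑ k ∈ Finset.range (K + 1), Polynomial.X ^ n k with hPdef
  have haeval : ∀ η : ℂ, (Polynomial.aeval η) P = ∑ k ∈ Finset.range (K + 1), η ^ n k := by
    intro η
    rw [hPdef, map_sum]
    exact Finset.sum_congr rfl fun k _ => by simp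
  have hrootζ : (Polynomial.aeval ζ) P = 0 := by
    rw [haeval, ← hS]
    exact Finset.sum_congr rfl fun k _ =>
      (zpow_emod_eq hζ0 hNpos (hζ.pow_eq_one) (a k)).symm
  have hdvd : Polynomial.cyclotomic N ℚ ∣ P := by
    rw [Polynomial.cyclotomic_eq_minpoly_rat hζ hNpos]
    exact minpoly.dvd ℚ ζ hrootζ
  have hvanish : ∀ η : ℂ, IsPrimitiveRoot η N → (Polynomial.aeval η) P = 0 := by
    intro η hη
    obtain ⟨Q, hQ⟩ := hdvd
    rw [hQ, map_mul]
    have hcyc : (Polynomial.aeval η) (Polynomial.cyclotomic N ℚ) = 0 := by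
      have h1 := hη.isRoot_cyclotomic hNpos
      rw [Polynomial.aeval_def, Polynomial.eval₂_eq_eval_map, Polynomial.map_cyclotomic]
      exact h1
    rw [hcyc, zero_mul]
  -- the conjugate exponents
  set m : ℕ → ℕ := fun s => 1 + s * (p ^ u * t) with hmdef
  have hcop : ∀ s : ℕ, Nat.Coprime (m s) N := by
    intro s
    have h1 : Nat.Coprime (m s) (p ^ u * t) := by
      rw [hmdef]
      simp only [] at *; exact (Nat.coprime_add_mul_right_left 1 (p ^ u * t) s).mpr (Nat.coprime_one_left _)
    have hpd : p ∣ p ^ u * t := Dvd.dvd.mul_right (dvd_pow_self p hu.ne') t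
    have h2 : Nat.Coprime (m s) p := Nat.Coprime.coprime_dvd_right hpd h1
    have h3 : Nat.Coprime (m s) t := Nat.Coprime.coprime_dvd_right (dvd_mul_left t (p ^ u)) h1
    exact Nat.Coprime.mul_right (h2.pow_right (u + 1)) h3
  have hηs : ∀ s : ℕ, IsPrimitiveRoot (ζ ^ m s) N := fun s => hζ.pow_of_coprime (m s) (hcop s)
  have hSs : ∀ s : ℕ, ∑ k ∈ Finset.range (K + 1), ζ ^ ((m s : ℤ) * a k) = 0 := by
    intro s
    have h0 := hvanish _ (hηs s)
    rw [haeval] at h0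
    rw [← h0]
    refine Finset.sum_congr rfl fun k _ => ?_
    have hne : (ζ ^ m s : ℂ) ≠ 0 := pow_ne_zero _ hζ0
    have hone : (ζ ^ m s) ^ N = 1 := (hηs s).pow_eq_one
    calc ζ ^ ((m s : ℤ) * a k) = (ζ ^ m s) ^ a k := by rw [zpow_mul, zpow_natCast]
      _ = (ζ ^ m s) ^ n k := zpow_emod_eq hne hNpos hone (a k)
  -- the p-th root of unity ω
  set ω : ℂ := ζ ^ (p ^ u * t) with hωdef
  have hω : IsPrimitiveRoot ω p := hζ.pow hNpos (by rw [hNdef]; ring)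
  have hω0 : ω ≠ 0 := pow_ne_zero _ hζ0
  have hωdvd : ∀ j : ℤ, (p : ℤ) ∣ j → ω ^ j = 1 := fun j hj => (hω.zpow_eq_one_iff_dvd j).mpr hj
  have hsplit : ∀ s k : ℕ, ζ ^ ((m s : ℤ) * a k) = ζ ^ a k * (ω ^ ((r : ℤ) * k)) ^ s := by
    intro s k
    have h2 : ω ^ a k = ω ^ ((r : ℤ) * k) := by
      have hrepr : a k = (r : ℤ) * k + (p : ℤ) * ((p : ℤ) ^ (u - 1) * t * (b * k ^ 2 + α * k)) := by
        have hpu : (p : ℤ) ^ u = (p : ℤ) * (p : ℤ) ^ (u - 1) := by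
          conv_lhs => rw [show u = 1 + (u - 1) by omega]
          rw [pow_add, pow_one]
        rw [hadef]
        simp only []
        rw [hpu]; ring
      rw [hrepr, zpow_add₀ hω0, hωdvd _ ⟨_, rfl⟩, mul_one]
    have h1 : (m s : ℤ) * a k = a k + ((p ^ u * t : ℕ) : ℤ) * ((s : ℤ) * a k) := by
      rw [hmdef]; push_cast; ring
    rw [h1, zpow_add₀ hζ0, zpow_mul, zpow_natCast, ← hωdef,
      show (s : ℤ) * a k = a k * (s : ℤ) from mul_comm _ _, zpow_mul, h2, zpow_natCast]
  have hsum : ∑ k ∈ Finset.range (K + 1), ∑ s ∈ Finset.range p, ζ ^ ((m s : ℤ) * a k) = 0 := by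
    rw [Finset.sum_comm]
    exact Finset.sum_eq_zero fun s _ => hSs s
  have hsum2 : ∑ k ∈ Finset.range (K + 1),
      ζ ^ a k * ∑ s ∈ Finset.range p, (ω ^ ((r : ℤ) * k)) ^ s = 0 := by
    rw [← hsum]
    refine Finset.sum_congr rfl fun k _ => ?_
    rw [Finset.mul_sum]
    exact Finset.sum_congr rfl fun s _ => (hsplit s k).symm
  have hgeom : ∀ k ∈ Finset.range (K + 1), k ≠ 0 →
      ζ ^ a k * ∑ s ∈ Finset.range p, (ω ^ ((r : ℤ) * k)) ^ s = 0 := by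
    intro k hk hk0
    have hklt : k < p := lt_of_lt_of_le (Finset.mem_range.mp hk) (by omega)
    have hx1 : ω ^ ((r : ℤ) * k) ≠ 1 := by
      intro hx
      rw [hω.zpow_eq_one_iff_dvd] at hx
      have hdvd' := hx
      have hpZ : Prime ((p : ℤ)) := Int.prime_iff_natAbs_prime.mpr (by simpa using hp)
      rcases hpZ.dvd_mul.mp hdvd' with h | h
      · have hg : (p : ℤ) ∣ ((Int.gcd r ((p : ℤ) * t) : ℕ) : ℤ) :=
          Int.dvd_coe_gcd h ⟨t, rfl⟩
        rw [hr] at hg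
        have := Int.le_of_dvd one_pos hg
        have := hp.two_le
        omega
      · have hpk : p ∣ k := by exact_mod_cast h
        have := Nat.le_of_dvd (Nat.pos_of_ne_zero hk0) hpk
        omega
    have hxp : (ω ^ ((r : ℤ) * k)) ^ p = 1 := by
      rw [← zpow_natCast (ω ^ ((r : ℤ) * k)) p, ← zpow_mul]
      exact hωdvd _ ⟨r * k, by ring⟩
    rw [geom_sum_eq hx1, hxp, sub_self, zero_div, mul_zero]
  have hone : ζ ^ a 0 * ∑ s ∈ Finset.range p, (ω ^ ((r : ℤ) * (0 : ℕ))) ^ s = p := by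
    have ha0 : a 0 = 0 := by rw [hadef]; push_cast; ring
    simp [ha0]
  have hfinal := Finset.sum_eq_single_of_mem (0 : ℕ)
    (Finset.mem_range.mpr (Nat.succ_pos K)) hgeom
  rw [hfinal, hone] at hsum2
  exact Nat.cast_ne_zero.mpr hppos.ne' hsum2
end

section
/- Let q be an even squarefree positive integer (so q/2 is odd and squarefree), α an integer, and K an integer with 0 ≤ K < q. Then Σ_{k=0}^{K} e((k² + (4α+1)k)/q) ≠ 0. -/
open Polynomial Finset


-- helper: power reduction mod m
lemma pow_mod_eq {z : ℂ} {m : ℕ} (hz : z ^ m = 1) (a : ℕ) : z ^ a = z ^ (a % m) := by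
  conv_lhs => rw [← Nat.div_add_mod a m]
  rw [pow_add, pow_mul, hz, one_pow, one_mul]

lemma zpow_eq_pow_val {z : ℂ} {m : ℕ} [NeZero m] (hz : z ^ m = 1) (hz0 : z ≠ 0) (a : ℤ) :
    z ^ a = z ^ ((a : ZMod m).val) := by
  have h1 : (((a : ZMod m).val : ℤ)) = a % m := ZMod.val_intCast a
  have h2 : z ^ a = z ^ (a % (m : ℤ)) := by
    conv_lhs => rw [← Int.mul_ediv_add_emod a m]
    rw [zpow_add₀ hz0, zpow_mul, zpow_natCast, hz, one_zpow, one_mul]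
  rw [h2, ← h1, zpow_natCast]

-- sum of all m-th roots of unity vanishes for m > 1
lemma sum_nthRoots_zero {m : ℕ} (hm : 1 < m) :
    ∑ z ∈ Polynomial.nthRootsFinset m (1 : ℂ), z = 0 := by
  have hm0 : m ≠ 0 := by omega
  have hprim : IsPrimitiveRoot (Complex.exp (2 * Real.pi * Complex.I / m)) m :=
    Complex.isPrimitiveRoot_exp m hm0
  set ζ := Complex.exp (2 * Real.pi * Complex.I / m)
  haveI : NeZero m := ⟨hm0⟩
  have himg : Polynomial.nthRootsFinset m (1 : ℂ) = (Finset.range m).image (fun i => ζ ^ i) := by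
    ext z
    rw [Polynomial.mem_nthRootsFinset (by omega), Finset.mem_image]
    constructor
    · intro hz
      obtain ⟨i, hi, hie⟩ := hprim.eq_pow_of_pow_eq_one hz
      exact ⟨i, Finset.mem_range.mpr hi, hie⟩
    · rintro ⟨i, _, rfl⟩
      rw [← pow_mul, mul_comm, pow_mul, hprim.pow_eq_one, one_pow]
  rw [himg, Finset.sum_image (fun i hi j hj h =>
    hprim.pow_inj (Finset.mem_range.mp hi) (Finset.mem_range.mp hj) h)]
  have hne : ζ ≠ 1 := hprim.ne_one hm
  have := geom_sum_eq hne m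
  rw [this, hprim.pow_eq_one, sub_self, zero_div]




lemma sum_primitiveRoots_eq_moebius :
    ∀ m : ℕ, m ≠ 0 →
      (∑ z ∈ primitiveRoots m ℂ, z) = ((ArithmeticFunction.moebius m : ℤ) : ℂ) := by
  intro m
  induction m using Nat.strong_induction_on with
  | _ m ih =>
    intro hm0
    rcases eq_or_lt_of_le (Nat.one_le_iff_ne_zero.mpr hm0) with h1 | h1
    · rw [← h1, IsPrimitiveRoot.primitiveRoots_one]
      simp
    · -- m > 1
      have hprim : IsPrimitiveRoot (Complex.exp (2 * Real.pi * Complex.I / m)) m :=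
      Complex.isPrimitiveRoot_exp m hm0
      have hbi := IsPrimitiveRoot.nthRoots_one_eq_biUnion_primitiveRoots (R := ℂ) (n := m)
      have hdisj : ∀ d₁ ∈ m.divisors, ∀ d₂ ∈ m.divisors, d₁ ≠ d₂ →
          Disjoint (primitiveRoots d₁ ℂ) (primitiveRoots d₂ ℂ) := by
        intro d₁ _ d₂ _ h
        exact IsPrimitiveRoot.disjoint h
      have hsum : ∑ d ∈ m.divisors, (∑ z ∈ primitiveRoots d ℂ, z) = 0 := by
        rw [← Finset.sum_biUnion hdisj, ← hbi, sum_nthRoots_zero h1]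
      have hmem : m ∈ m.divisors := Nat.mem_divisors_self m hm0
      have hmu : ∑ d ∈ m.divisors, ((ArithmeticFunction.moebius d : ℤ) : ℂ) = 0 := by
        have h := ArithmeticFunction.moebius_mul_coe_zeta
        have h2 : (ArithmeticFunction.moebius * ArithmeticFunction.zeta : ArithmeticFunction ℤ) m
            = ∑ d ∈ m.divisors, ArithmeticFunction.moebius d := by
          rw [ArithmeticFunction.coe_mul_zeta_apply]
        rw [h] at h2
        have h3 : (1 : ArithmeticFunction ℤ) m = 0 := by
          rw [ArithmeticFunction.one_apply]
          simp [show m ≠ 1 by omega]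
        rw [h3] at h2
        have : ((∑ d ∈ m.divisors, ArithmeticFunction.moebius d : ℤ) : ℂ) = 0 := by
          rw [← h2]; simp
        simpa using this
      -- split off d = m
      rw [← Finset.add_sum_erase _ _ hmem] at hsum hmu
      have hih : ∑ d ∈ m.divisors.erase m, (∑ z ∈ primitiveRoots d ℂ, z)
          = ∑ d ∈ m.divisors.erase m, ((ArithmeticFunction.moebius d : ℤ) : ℂ) := by
        refine Finset.sum_congr rfl fun d hd => ?_
        have hd' := Finset.mem_of_mem_erase hd
        have hdne := Finset.ne_of_mem_erase hd
        have hdvd := (Nat.mem_divisors.mp hd').1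
        have hdne0 : d ≠ 0 := fun h => by simp [h] at hdvd; omega
        exact ih d (lt_of_le_of_ne (Nat.le_of_dvd (by omega) hdvd) hdne) hdne0
      rw [hih] at hsum
      linear_combination hsum - hmu


lemma exists_global_nonsquare :
    ∀ m : ℕ, Odd m → Squarefree m → ∃ t : ZMod m, ∀ x : ZMod m, IsUnit (x * x - t) := by
  intro m
  induction m using Nat.strong_induction_on with
  | _ m ih =>
    intro hodd hsf
    rcases eq_or_ne m 1 with h1 | h1
    · subst h1
      refine ⟨0, fun x => ?_⟩
      rw [Subsingleton.elim (x * x - 0) (1 : ZMod 1)]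
      exact isUnit_one
    · have hm0 : m ≠ 0 := by rintro rfl; simp [Nat.odd_iff] at hodd
      have hpprime : m.minFac.Prime := Nat.minFac_prime h1
      obtain ⟨m₂, hm⟩ := Nat.minFac_dvd m
      set p := m.minFac
      have hm₂0 : m₂ ≠ 0 := fun h => hm0 (by rw [hm, h, mul_zero])
      have hoddpm : Odd p ∧ Odd m₂ := Nat.odd_mul.mp (hm ▸ hodd)
      have hp2 : p ≠ 2 := by
        rintro h2; rw [h2] at hoddpm; simp [Nat.odd_iff] at hoddpm
      have hcop : Nat.Coprime p m₂ := by
        rw [Nat.Prime.coprime_iff_not_dvd hpprime]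
        intro hdvd
        have : p * p ∣ m := by rw [hm]; exact mul_dvd_mul_left p hdvd
        exact hpprime.ne_one (Nat.isUnit_iff.mp (hsf p this))
      have hm₂lt : m₂ < m := by
        rw [hm]
        have := hpprime.two_le
        have h2 : 1 ≤ m₂ := Nat.pos_of_ne_zero hm₂0
        nlinarith
      obtain ⟨t₂, ht₂⟩ := ih m₂ hm₂lt hoddpm.2 (hsf.squarefree_of_dvd ⟨p, by rw [hm]; ring⟩)
      haveI : Fact p.Prime := ⟨hpprime⟩
      obtain ⟨t₁, ht₁⟩ : ∃ a : ZMod p, ¬IsSquare a := by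
        apply FiniteField.exists_nonsquare
        rw [ZMod.ringChar_zmod_n]; exact hp2
      have ht₁' : ∀ x : ZMod p, IsUnit (x * x - t₁) := by
        intro x
        rw [isUnit_iff_ne_zero, sub_ne_zero]
        intro h
        exact ht₁ ⟨x, h.symm⟩
      have e : ZMod m ≃+* ZMod p × ZMod m₂ := by rw [hm]; exact ZMod.chineseRemainder hcop
      refine ⟨e.symm (t₁, t₂), fun x => ?_⟩
      obtain ⟨y₁, hy₁⟩ := (ht₁' (e x).1).exists_right_inv
      obtain ⟨y₂, hy₂⟩ := (ht₂ (e x).2).exists_right_inv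
      apply IsUnit.of_mul_eq_one (e.symm (y₁, y₂))
      apply e.injective
      rw [map_mul, map_one, RingEquiv.apply_symm_apply]
      have hx : e (x * x - e.symm (t₁, t₂)) = ((e x).1 * (e x).1 - t₁, (e x).2 * (e x).2 - t₂) := by
        rw [map_sub, map_mul, RingEquiv.apply_symm_apply]
        rfl
      rw [hx, Prod.mk_mul_mk, hy₁, hy₂]
      rfl




lemma sum_primpow_unit {m : ℕ} [NeZero m] {u : ZMod m} (hu : IsUnit u) :
    ∑ z ∈ primitiveRoots m ℂ, z ^ u.val = ∑ z ∈ primitiveRoots m ℂ, z := by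
  have hmpos : 0 < m := Nat.pos_of_ne_zero (NeZero.ne m)
  obtain ⟨v, rfl⟩ := hu
  have hval : ∀ w : (ZMod m)ˣ, ∀ z ∈ primitiveRoots m ℂ,
      z ^ (w : ZMod m).val ∈ primitiveRoots m ℂ := by
    intro w z hz
    have hzp := (mem_primitiveRoots hmpos).mp hz
    exact (mem_primitiveRoots hmpos).mpr
      (hzp.pow_of_coprime _ (ZMod.val_coe_unit_coprime w))
  have hinv : ∀ w : (ZMod m)ˣ, ∀ z ∈ primitiveRoots m ℂ,
      (z ^ (w : ZMod m).val) ^ ((w⁻¹ : (ZMod m)ˣ) : ZMod m).val = z := by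
    intro w z hz
    have hzp := (mem_primitiveRoots hmpos).mp hz
    have h1 : z ^ m = 1 := hzp.pow_eq_one
    rw [← pow_mul, pow_mod_eq h1, ← ZMod.val_mul, Units.mul_inv, ZMod.val_one_eq_one_mod, ← pow_mod_eq h1, pow_one]
  refine Finset.sum_nbij' (fun z => z ^ ((v : ZMod m)).val)
    (fun z => z ^ (((v⁻¹ : (ZMod m)ˣ)) : ZMod m).val) (hval v) (hval v⁻¹) (hinv v) ?_ ?_
  · intro z hz
    have := hinv v⁻¹ z hz
    rwa [inv_inv] at this
  · intro z hz
    rfl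









theorem stmt19 (q : ℕ) (hq : 0 < q) (heven : Even q) (hsf : Squarefree q) (α : ℤ)
    (K : ℕ) (hK : K < q) :
    ∑ k ∈ Finset.range (K + 1),
      e ((((k : ℤ) ^ 2 + (4 * α + 1) * k : ℤ) : ℝ) / q) ≠ 0 := by
  intro hS
  obtain ⟨m, hm⟩ := heven
  have hq2 : q = 2 * m := by omega
  have hm0 : m ≠ 0 := by omega
  haveI : NeZero m := ⟨hm0⟩
  have hmpos : 0 < m := Nat.pos_of_ne_zero hm0
  have hmodd : Odd m := by
    rcases Nat.even_or_odd m with he | ho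
    · exfalso
      obtain ⟨j, hj⟩ := he
      have h4 : 2 * 2 ∣ q := ⟨j, by omega⟩
      have := hsf 2 h4
      simp [Nat.isUnit_iff] at this
    · exact ho
  have hmsf : Squarefree m := hsf.squarefree_of_dvd ⟨2, by omega⟩
  set b : ℤ := 4 * α + 1 with hb
  set g : ℕ → ℤ := fun k => ((k : ℤ) ^ 2 + b * k) / 2 with hg
  have hgdouble : ∀ k : ℕ, 2 * g k = (k : ℤ) ^ 2 + b * k := by
    intro k
    apply Int.two_mul_ediv_two_of_even
    have h1 : (k : ℤ) ^ 2 + b * k = (k : ℤ) * ((k : ℤ) + 1) + 2 * (2 * α * (k : ℤ)) := by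
      rw [hb]; ring
    rw [h1]
    exact (Int.even_mul_succ_self (k : ℤ)).add (even_two_mul _)
  set ζ : ℂ := Complex.exp (2 * Real.pi * Complex.I / m) with hζdef
  have hprim : IsPrimitiveRoot ζ m := Complex.isPrimitiveRoot_exp m hm0
  have hζ0 : ζ ≠ 0 := Complex.exp_ne_zero _
  have hζ1 : ζ ^ m = 1 := hprim.pow_eq_one
  set r : ℕ → ZMod m := fun k => ((g k : ℤ) : ZMod m) with hr
  -- identify each term
  have hterm : ∀ k : ℕ, e ((((k : ℤ) ^ 2 + b * k : ℤ) : ℝ) / q) = ζ ^ (r k).val := by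
    intro k
    have hmC : (m : ℂ) ≠ 0 := by exact_mod_cast hm0
    have hqC : (q : ℂ) ≠ 0 := by exact_mod_cast hq.ne'
    have hn : (k : ℤ) ^ 2 + b * k = 2 * g k := (hgdouble k).symm
    rw [hn]
    show Complex.exp (2 * Real.pi * Complex.I * (((2 * g k : ℤ) : ℝ) / q : ℝ)) = _
    have harg : 2 * (Real.pi : ℂ) * Complex.I * ((((2 * g k : ℤ) : ℝ) / (q : ℝ) : ℝ) : ℂ)
        = ((g k : ℤ) : ℂ) * (2 * Real.pi * Complex.I / m) := by
      rw [hq2]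
      push_cast
      field_simp
    rw [harg, Complex.exp_int_mul]
    exact zpow_eq_pow_val hζ1 hζ0 (g k)
  rw [Finset.sum_congr rfl (fun k _ => hterm k)] at hS
  -- conjugates vanish
  set P : Polynomial ℤ := ∑ k ∈ Finset.range (K + 1), Polynomial.X ^ (r k).val with hP
  have hcomp : ∀ (F : Type) [inst : Field F] [inst2 : Algebra ℚ F], True := fun _ _ _ => trivial
  have hPeval : ∀ z : ℂ, Polynomial.eval z (P.map (Int.castRingHom ℂ))
      = ∑ k ∈ Finset.range (K + 1), z ^ (r k).val := by
    intro z
    rw [hP, Polynomial.map_sum, Polynomial.eval_finset_sum]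
    refine Finset.sum_congr rfl fun k _ => ?_
    rw [Polynomial.map_pow, Polynomial.map_X, Polynomial.eval_pow, Polynomial.eval_X]
  have hconj : ∀ z ∈ primitiveRoots m ℂ,
      ∑ k ∈ Finset.range (K + 1), z ^ (r k).val = 0 := by
    intro z hz
    have hzprim := (mem_primitiveRoots hmpos).mp hz
    have hcast : (algebraMap ℚ ℂ).comp (Int.castRingHom ℚ) = Int.castRingHom ℂ := by
      apply RingHom.ext; intro n; simp
    have hPζ : Polynomial.aeval ζ (P.map (Int.castRingHom ℚ)) = 0 := by
      rw [Polynomial.aeval_def, Polynomial.eval₂_eq_eval_map, Polynomial.map_map, hcast,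
        hPeval]
      exact hS
    have hdvd : minpoly ℚ ζ ∣ P.map (Int.castRingHom ℚ) := minpoly.dvd ℚ ζ hPζ
    rw [← Polynomial.cyclotomic_eq_minpoly_rat hprim hmpos] at hdvd
    have hdvd2 : Polynomial.cyclotomic m ℂ ∣ P.map (Int.castRingHom ℂ) := by
      have h3 := Polynomial.map_dvd (algebraMap ℚ ℂ) hdvd
      rwa [Polynomial.map_cyclotomic, Polynomial.map_map, hcast] at h3
    obtain ⟨Q, hQ⟩ := hdvd2
    have hroot : Polynomial.eval z (Polynomial.cyclotomic m ℂ) = 0 :=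
      hzprim.isRoot_cyclotomic hmpos
    have hz0 : Polynomial.eval z (P.map (Int.castRingHom ℂ)) = 0 := by
      rw [hQ, Polynomial.eval_mul, hroot, zero_mul]
    rwa [hPeval] at hz0
  -- construct the shift s
  obtain ⟨t, ht⟩ := exists_global_nonsquare m hmodd hmsf
  have h8 : IsUnit (8 : ZMod m) := by
    have hc8 : Nat.Coprime 8 m := by
      have h23 : (8 : ℕ) = 2 ^ 3 := by norm_num
      rw [h23]
      exact Nat.Coprime.pow_left 3 (Nat.coprime_two_left.mpr hmodd)
    have := (ZMod.isUnit_iff_coprime 8 m).mpr hc8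
    simpa using this
  obtain ⟨u8, hu8⟩ := h8
  set s : ZMod m := ((u8⁻¹ : (ZMod m)ˣ) : ZMod m) * (t - ((b : ℤ) : ZMod m) ^ 2) with hs
  have hsmul : (8 : ZMod m) * s = t - ((b : ℤ) : ZMod m) ^ 2 := by
    rw [hs, ← hu8, ← mul_assoc, Units.mul_inv, one_mul]
  have hunit : ∀ k : ℕ, IsUnit (r k - s) := by
    intro k
    have h8g : (8 : ℤ) * g k = (2 * (k : ℤ) + b) ^ 2 - b ^ 2 := by
      have h2 := hgdouble k; nlinarith [h2]
    have h8r : (8 : ZMod m) * r k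
        = ((2 * (k : ℤ) + b : ℤ) : ZMod m) ^ 2 - ((b : ℤ) : ZMod m) ^ 2 := by
      have hcast : ((8 * g k : ℤ) : ZMod m) = (((2 * (k : ℤ) + b) ^ 2 - b ^ 2 : ℤ) : ZMod m) := by
        rw [h8g]
      push_cast at hcast
      rw [hr]
      push_cast
      convert hcast using 2
    have hkey : (8 : ZMod m) * (r k - s)
        = ((2 * (k : ℤ) + b : ℤ) : ZMod m) * ((2 * (k : ℤ) + b : ℤ) : ZMod m) - t := by
      rw [mul_sub, h8r, hsmul]
      push_cast
      ring
    have hu := ht ((2 * (k : ℤ) + b : ℤ) : ZMod m)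
    rw [← hkey] at hu
    exact isUnit_of_mul_isUnit_right hu
  -- final identity
  have hR0 : (∑ z ∈ primitiveRoots m ℂ, z) ≠ 0 := by
    rw [sum_primitiveRoots_eq_moebius m hm0]
    exact_mod_cast ArithmeticFunction.moebius_ne_zero_iff_squarefree.mpr hmsf
  have hfinal : ((K + 1 : ℕ) : ℂ) * (∑ z ∈ primitiveRoots m ℂ, z) = 0 := by
    calc ((K + 1 : ℕ) : ℂ) * ∑ z ∈ primitiveRoots m ℂ, z
        = ∑ _k ∈ Finset.range (K + 1), ∑ z ∈ primitiveRoots m ℂ, z := by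
          rw [Finset.sum_const, Finset.card_range, nsmul_eq_mul]
      _ = ∑ k ∈ Finset.range (K + 1), ∑ z ∈ primitiveRoots m ℂ, z ^ ((r k - s : ZMod m)).val := by
          refine Finset.sum_congr rfl fun k _ => ?_
          exact (sum_primpow_unit (hunit k)).symm
      _ = ∑ z ∈ primitiveRoots m ℂ, ∑ k ∈ Finset.range (K + 1), z ^ ((r k - s : ZMod m)).val :=
          Finset.sum_comm
      _ = ∑ z ∈ primitiveRoots m ℂ,
            z ^ ((-s : ZMod m)).val * ∑ k ∈ Finset.range (K + 1), z ^ (r k).val := by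
          refine Finset.sum_congr rfl fun z hz => ?_
          have hz1 : z ^ m = 1 := ((mem_primitiveRoots hmpos).mp hz).pow_eq_one
          rw [Finset.mul_sum]
          refine Finset.sum_congr rfl fun k _ => ?_
          rw [← pow_add, pow_mod_eq hz1 ((-s : ZMod m).val + (r k).val), ← ZMod.val_add,
            sub_eq_neg_add]
      _ = 0 := by
          apply Finset.sum_eq_zero
          intro z hz
          rw [hconj z hz, mul_zero]
  have hK0 : ((K + 1 : ℕ) : ℂ) ≠ 0 := by exact_mod_cast Nat.succ_ne_zero K
  exact hR0 ((mul_eq_zero.mp hfinal).resolve_left hK0)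
end
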